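/- Let X be a finite-dimensional real inner product space, Y ⊆ X a linear subspace with orthogonal projection π : X → Y, and fix w, w' ∈ X with w ≠ w', w ∈ Y. Define B = (√E/|w−w'|³)(|w−w'|²·Id_Y − (w − π(w'))⊗(w − π(w'))) as an endomorphism of Y, where E > 0 and (u⊗u)(v) = ⟨u,v⟩u. Then B is self-adjoint and positive semidefinite; B is positive definite if w' ∉ Y, and if w' ∈ Y then the kernel of B equals the span of w − w'. -/

import Mathlib

open scoped RealInnerProductSpace

/-- The graph operator `B = (√E/|w−w'|³)(|w−w'|²·Id − (w − π(w'))⊗(w − π(w')))` of the elementary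
Lagrangian relation, as an endomorphism of the collision plane `Y` (with `π` the orthogonal
projection onto `Y`, `w ∈ Y`, `w ≠ w'`, `E > 0`): it preserves `Y`, is self-adjoint and positive
semidefinite on `Y`; it is positive definite on `Y` if `w' ∉ Y`, and if `w' ∈ Y` its kernel in
`Y` is the span of `w − w'`. -/
theorem stmt16 (X : Type*) [NormedAddCommGroup X] [InnerProductSpace ℝ X]
    [FiniteDimensional ℝ X] (Y : Submodule ℝ X) (w w' : X) (hww' : w ≠ w') (hw : w ∈ Y)
    (E : ℝ) (hE : 0 < E) :
    let p : X := w - ((Y.orthogonalProjectionOnto w' : Y) : X)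
    let B : X →L[ℝ] X := (Real.sqrt E / ‖w - w'‖ ^ 3) •
      (‖w - w'‖ ^ 2 • ContinuousLinearMap.id ℝ X - (innerSL ℝ p).smulRight p)
    (∀ v ∈ Y, B v ∈ Y) ∧
      (∀ u v : X, ⟪B u, v⟫ = ⟪u, B v⟫) ∧
      (∀ v ∈ Y, 0 ≤ ⟪B v, v⟫) ∧
      (w' ∉ Y → ∀ v ∈ Y, v ≠ 0 → 0 < ⟪B v, v⟫) ∧
      (w' ∈ Y → ∀ v ∈ Y, (B v = 0 ↔ ∃ c : ℝ, v = c • (w - w'))) := by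
  intro p B
  have hwsub : w - w' ≠ 0 := sub_ne_zero_of_ne hww'
  have hnorm : (0:ℝ) < ‖w - w'‖ := norm_pos_iff.mpr hwsub
  have hc : (0:ℝ) < Real.sqrt E / ‖w - w'‖ ^ 3 := by positivity
  have hpY : p ∈ Y := Y.sub_mem hw (Submodule.coe_mem _)
  have hBapp : ∀ v, B v = (Real.sqrt E / ‖w - w'‖ ^ 3) •
      ((‖w - w'‖ ^ 2) • v - ⟪p, v⟫ • p) := by
    intro v
    simp [B]
  have hinner : ∀ u v, ⟪B u, v⟫ = (Real.sqrt E / ‖w - w'‖ ^ 3) *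
      ((‖w - w'‖ ^ 2) * ⟪u, v⟫ - ⟪p, u⟫ * ⟪p, v⟫) := by
    intro u v
    rw [hBapp]
    simp [inner_smul_left, inner_sub_left, real_inner_smul_left]
  -- Pythagoras
  have hperp : ⟪p, ((Y.orthogonalProjectionOnto w' : Y) : X) - w'⟫ = 0 := by
    have h : ⟪w' - ((Y.orthogonalProjectionOnto w' : Y) : X), p⟫ = 0 :=
      Submodule.starProjection_inner_eq_zero (K := Y) w' p hpY
    rw [real_inner_comm, ← neg_sub w' ((Y.orthogonalProjectionOnto w' : Y) : X),
      inner_neg_left, h, neg_zero]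
  have hdecomp : w - w' = p + (((Y.orthogonalProjectionOnto w' : Y) : X) - w') := by
    simp [p]
  have hpyth : ‖w - w'‖ ^ 2 = ‖p‖ ^ 2 + ‖((Y.orthogonalProjectionOnto w' : Y) : X) - w'‖ ^ 2 := by
    rw [hdecomp, norm_add_sq_real, hperp]
    ring
  have hple : ‖p‖ ^ 2 ≤ ‖w - w'‖ ^ 2 := by
    rw [hpyth]
    exact le_add_of_nonneg_right (by positivity)
  refine ⟨?_, ?_, ?_, ?_, ?_⟩
  · intro v hv
    rw [hBapp]
    exact Y.smul_mem _ (Y.sub_mem (Y.smul_mem _ hv) (Y.smul_mem _ hpY))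
  · intro u v
    have h3 : (⟪u, B v⟫:ℝ) = ⟪B v, u⟫ := real_inner_comm _ _
    have h4 : (⟪u, v⟫:ℝ) = ⟪v, u⟫ := real_inner_comm _ _
    rw [hinner u v, h3, hinner v u, h4]
    ring
  · intro v hv
    rw [hinner]
    apply mul_nonneg hc.le
    have hcs := real_inner_mul_inner_self_le p v
    rw [real_inner_self_eq_norm_sq, real_inner_self_eq_norm_sq] at hcs
    rw [real_inner_self_eq_norm_sq]
    nlinarith [mul_nonneg (sub_nonneg.mpr hple) (sq_nonneg ‖v‖)]
  · intro hw' v hv hv0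
    have hneq : ((Y.orthogonalProjectionOnto w' : Y) : X) - w' ≠ 0 := by
      intro h
      exact hw' ((sub_eq_zero.mp h) ▸ Submodule.coe_mem (Y.orthogonalProjectionOnto w'))
    have hplt : ‖p‖ ^ 2 < ‖w - w'‖ ^ 2 := by
      rw [hpyth]
      have : 0 < ‖((Y.orthogonalProjectionOnto w' : Y) : X) - w'‖ := norm_pos_iff.mpr hneq
      nlinarith
    rw [hinner]
    apply mul_pos hc
    have hcs := real_inner_mul_inner_self_le p v
    rw [real_inner_self_eq_norm_sq, real_inner_self_eq_norm_sq] at hcs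
    rw [real_inner_self_eq_norm_sq]
    have hv0' : 0 < ‖v‖ := norm_pos_iff.mpr hv0
    nlinarith [mul_pos (sub_pos.mpr hplt) (pow_pos hv0' 2)]
  · intro hw' v hv
    have hproj : ((Y.orthogonalProjectionOnto w' : Y) : X) = w' :=
      Submodule.starProjection_eq_self_iff.mpr hw'
    have hp : p = w - w' := by simp [p, hproj]
    constructor
    · intro hBv
      rw [hBapp] at hBv
      rcases smul_eq_zero.mp hBv with h | h
      · exact absurd h hc.ne'
      · have h2 : (‖w - w'‖ ^ 2) • v = ⟪p, v⟫ • p := by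
          rwa [sub_eq_zero] at h
        have hv2 : ((‖w - w'‖ ^ 2)⁻¹ : ℝ) • (⟪p, v⟫ • p) = v :=
          (inv_smul_eq_iff₀ (by positivity : (0:ℝ) < ‖w - w'‖ ^ 2).ne').mpr h2.symm
        rw [hp] at hv2
        exact ⟨(‖w - w'‖ ^ 2)⁻¹ * ⟪w - w', v⟫, by rw [mul_smul, hv2]⟩
    · rintro ⟨c, rfl⟩
      rw [hBapp]
      have h1 : ⟪p, c • (w - w')⟫ = c * ‖w - w'‖ ^ 2 := by
        rw [hp, real_inner_smul_right, real_inner_self_eq_norm_sq]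
      rw [h1, hp]
      module
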